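/- Let $p$ be a probability mass function on a finite set $\mathcal{X}$ with $p(x) > 0$ for all $x$. Define the set function $f(W) = \sum_{x \in W} p(x) \log \frac{p(x)}{p(W)}$ for $W \subseteq \mathcal{X}$, where $p(W) = \sum_{x \in W} p(x)$ (with the convention $f(\emptyset) = 0$). Then $f$ is submodular: $f(A) + f(B) \geq f(A \cup B) + f(A \cap B)$ for all $A, B \subseteq \mathcal{X}$. -/

import Mathlib

open Finset

/-- The set function `f(W) = ∑_{x ∈ W} p(x) log (p(x) / p(W))`. -/
noncomputable def fset {X : Type*} [DecidableEq X] (p : X → ℝ) (W : Finset X) : ℝ :=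
  ∑ x ∈ W, p x * Real.log (p x / ∑ y ∈ W, p y)

lemma mul_log_convex_key {i a b u : ℝ} (h0 : 0 ≤ i) (hia : i ≤ a) (hau : a ≤ u)
    (hs : a + b = i + u) :
    a * Real.log a + b * Real.log b ≤ i * Real.log i + u * Real.log u := by
  rcases eq_or_lt_of_le (hia.trans hau) with h | hiu
  · have ha : a = i := le_antisymm (by linarith [h ▸ hau]) hia
    have hb : b = u := by linarith
    rw [ha, hb, ← h]
  · set t : ℝ := (u - a) / (u - i) with ht
    have hui : 0 < u - i := by linarith
    have ht0 : 0 ≤ t := div_nonneg (by linarith) hui.le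
    have ht1 : t ≤ 1 := (div_le_one hui).2 (by linarith)
    have hts : t + (1 - t) = 1 := by ring
    have hiI : i ∈ Set.Ici (0 : ℝ) := h0
    have huI : u ∈ Set.Ici (0 : ℝ) := by exact le_trans (h0.trans hia) hau
    have hta : t * i + (1 - t) * u = a := by
      have key : t * (u - i) = u - a := by rw [ht]; exact div_mul_cancel₀ _ hui.ne'
      linear_combination -key
    have htb : (1 - t) * i + t * u = b := by
      have : b = i + u - a := by linarith
      have key : t * (u - i) = u - a := by rw [ht]; exact div_mul_cancel₀ _ hui.ne'
      rw [this]; linear_combination key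
    have h1 := Real.convexOn_mul_log.2 hiI huI ht0 (by linarith) hts
    have h2 := Real.convexOn_mul_log.2 hiI huI (show (0:ℝ) ≤ 1 - t by linarith) ht0 (by ring)
    simp only [smul_eq_mul] at h1 h2
    rw [hta] at h1; rw [htb] at h2
    nlinarith [h1, h2]

lemma fset_eq {X : Type*} [DecidableEq X] (p : X → ℝ) (hp : ∀ x, 0 < p x) (W : Finset X) :
    fset p W = (∑ x ∈ W, p x * Real.log (p x)) - (∑ x ∈ W, p x) * Real.log (∑ x ∈ W, p x) := by
  rcases W.eq_empty_or_nonempty with rfl | hW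
  · simp [fset]
  · have hs : 0 < ∑ y ∈ W, p y := Finset.sum_pos (fun x _ => hp x) hW
    unfold fset
    rw [Finset.sum_mul, ← Finset.sum_sub_distrib]
    refine Finset.sum_congr rfl fun x hx => ?_
    rw [Real.log_div (hp x).ne' hs.ne']
    ring

theorem fset_submodular {X : Type*} [Fintype X] [DecidableEq X] (p : X → ℝ)
    (hp : ∀ x, 0 < p x) (hsum : ∑ x, p x = 1) :
    ∀ A B : Finset X, fset p (A ∪ B) + fset p (A ∩ B) ≤ fset p A + fset p B := by
  intro A B
  rw [fset_eq p hp, fset_eq p hp, fset_eq p hp, fset_eq p hp]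
  have hL : (∑ x ∈ A ∪ B, p x * Real.log (p x)) + (∑ x ∈ A ∩ B, p x * Real.log (p x))
      = (∑ x ∈ A, p x * Real.log (p x)) + (∑ x ∈ B, p x * Real.log (p x)) :=
    Finset.sum_union_inter
  have hP : (∑ x ∈ A ∪ B, p x) + (∑ x ∈ A ∩ B, p x)
      = (∑ x ∈ A, p x) + (∑ x ∈ B, p x) := Finset.sum_union_inter
  have h0 : (0:ℝ) ≤ ∑ x ∈ A ∩ B, p x := Finset.sum_nonneg fun x _ => (hp x).le
  have hia : (∑ x ∈ A ∩ B, p x) ≤ ∑ x ∈ A, p x :=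
    Finset.sum_le_sum_of_subset_of_nonneg (Finset.inter_subset_left) fun x _ _ => (hp x).le
  have hau : (∑ x ∈ A, p x) ≤ ∑ x ∈ A ∪ B, p x :=
    Finset.sum_le_sum_of_subset_of_nonneg (Finset.subset_union_left) fun x _ _ => (hp x).le
  have key := mul_log_convex_key h0 hia hau (by linarith)
  linarith
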